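/- For all a>0, b>0 and every f ∈ C_c^∞(ℝ,ℂ) with ∫_ℝ |f(t)|² dt = a one has ∫_ℝ |f'(t)|² dt − b ∫_ℝ |f(t)|⁴ dt ≥ − b² a³ / 12. -/

import Mathlib

open MeasureTheory

noncomputable section

/-- We model `ℝ³` as `(ℝ × ℝ) × ℝ`, writing `x = (x_⊥, x₃)`. -/
abbrev R3 := (ℝ × ℝ) × ℝ

/-- The Euclidean norm `|x|` on `ℝ³`. -/
def enorm3 (x : R3) : ℝ := Real.sqrt (x.1.1 ^ 2 + x.1.2 ^ 2 + x.2 ^ 2)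

/-- The partial derivative `∂₁φ`. -/
def d1 (φ : R3 → ℂ) (x : R3) : ℂ := fderiv ℝ φ x ((1, 0), 0)

/-- The partial derivative `∂₂φ`. -/
def d2 (φ : R3 → ℂ) (x : R3) : ℂ := fderiv ℝ φ x ((0, 1), 0)

/-- The partial derivative `∂₃φ`. -/
def d3 (φ : R3 → ℂ) (x : R3) : ℂ := fderiv ℝ φ x ((0, 0), 1)

/-- The perpendicular part of the magnetic kinetic energy in the symmetric gauge
`A(x) = ((-B/2)x₂, (B/2)x₁, 0)`:
`∫ (|−i∂₁φ−(B/2)x₂φ|² + |−i∂₂φ+(B/2)x₁φ|²) dx`. -/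
def kinPerp (B : ℝ) (φ : R3 → ℂ) : ℝ :=
  ∫ x : R3, (‖-Complex.I * d1 φ x - ((B / 2 * x.1.2 : ℝ) : ℂ) * φ x‖ ^ 2
    + ‖-Complex.I * d2 φ x + ((B / 2 * x.1.1 : ℝ) : ℂ) * φ x‖ ^ 2)

/-- The full magnetic kinetic energy
`∫ (|−i∂₁φ−(B/2)x₂φ|² + |−i∂₂φ+(B/2)x₁φ|² + |∂₃φ|²) dx`. -/
def kinEnergy (B : ℝ) (φ : R3 → ℂ) : ℝ :=
  ∫ x : R3, (‖-Complex.I * d1 φ x - ((B / 2 * x.1.2 : ℝ) : ℂ) * φ x‖ ^ 2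
    + ‖-Complex.I * d2 φ x + ((B / 2 * x.1.1 : ℝ) : ℂ) * φ x‖ ^ 2
    + ‖d3 φ x‖ ^ 2)

/-- The Coulomb self-energy `∬ |φ(x)|²|φ(y)|²|x−y|⁻¹ dx dy` (without the factor 1/2). -/
def coulomb (φ : R3 → ℂ) : ℝ :=
  ∫ x : R3, ∫ y : R3, ‖φ x‖ ^ 2 * ‖φ y‖ ^ 2 / enorm3 (x - y)

/-- `D(|φ|²,|φ|²) = (1/2) ∬ |φ(x)|²|φ(y)|²|x−y|⁻¹ dx dy`. -/
def Dself (φ : R3 → ℂ) : ℝ := (1 / 2) * coulomb φ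

/-- The Pekar functional `E_{B,α}[φ]`. -/
def pekar (B α : ℝ) (φ : R3 → ℂ) : ℝ := kinEnergy B φ - α / 2 * coulomb φ

/-- `φ ∈ C_c^∞(ℝ³, ℂ)`. -/
def IsCcSmooth (φ : R3 → ℂ) : Prop := ContDiff ℝ (⊤ : ℕ∞) φ ∧ HasCompactSupport φ

/-- The Pekar ground state energy `E^c_{B,α}`, an infimum over normalized
compactly supported smooth functions. -/
def groundE (B α : ℝ) : ℝ :=
  sInf {E : ℝ | ∃ φ : R3 → ℂ, IsCcSmooth φ ∧ (∫ x : R3, ‖φ x‖ ^ 2) = 1 ∧ E = pekar B α φ}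

/-- The `L²(ℝ³)` norm `‖φ‖`. -/
def L2norm (φ : R3 → ℂ) : ℝ := Real.sqrt (∫ x : R3, ‖φ x‖ ^ 2)

/-- The `L²(ℝ³)` norm `‖∂₃φ‖`. -/
def L2normD3 (φ : R3 → ℂ) : ℝ := Real.sqrt (∫ x : R3, ‖d3 φ x‖ ^ 2)

/-- The kernel `K_B(x_⊥) = ln(1+√(1+(ln B)²|x_⊥|²)) − ln(√B |x_⊥|)` on `ℝ²`. -/
def Kker (B : ℝ) (p : ℝ × ℝ) : ℝ :=
  Real.log (1 + Real.sqrt (1 + Real.log B ^ 2 * (p.1 ^ 2 + p.2 ^ 2)))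
    - Real.log (Real.sqrt B * Real.sqrt (p.1 ^ 2 + p.2 ^ 2))

/-- The remainder term
`R_B^{(2)}(φ) = ∫_ℝ ∬_{ℝ²×ℝ²} |φ(x_⊥,x₃)|² |φ(y_⊥,x₃)|² K_B(x_⊥−y_⊥) dy_⊥ dx_⊥ dx₃`. -/
def R2err (B : ℝ) (φ : R3 → ℂ) : ℝ :=
  ∫ x3 : ℝ, ∫ xp : ℝ × ℝ, ∫ yp : ℝ × ℝ,
    ‖φ (xp, x3)‖ ^ 2 * ‖φ (yp, x3)‖ ^ 2 * Kker B (xp - yp)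

/-- The integral kernel of the lowest Landau level projection:
`P₀(x_⊥,y_⊥) = (B/(2π)) e^{−B|x_⊥−y_⊥|²/4} e^{iB(x₁y₂−x₂y₁)/2}`. -/
def P0ker (B : ℝ) (x y : ℝ × ℝ) : ℂ :=
  ((B / (2 * Real.pi) * Real.exp (-B * ((x.1 - y.1) ^ 2 + (x.2 - y.2) ^ 2) / 4) : ℝ) : ℂ)
    * Complex.exp (Complex.I * ((B * (x.1 * y.2 - x.2 * y.1) / 2 : ℝ) : ℂ))

/-- The lowest Landau level projection acting on functions on `ℝ³` (in the `x_⊥` variables). -/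
def P0 (B : ℝ) (φ : R3 → ℂ) : R3 → ℂ :=
  fun x => ∫ yp : ℝ × ℝ, P0ker B x.1 yp * φ (yp, x.2)

/-- `P_> φ = φ − P₀ φ`. -/
def Pgt (B : ℝ) (φ : R3 → ℂ) : R3 → ℂ := fun x => φ x - P0 B φ x

/-- The quadratic form of the two-dimensional Landau Hamiltonian
`H_B = (−i∂₁ + A₁)² + (−i∂₂ + A₂)²` in the symmetric gauge. -/
def kin2 (B : ℝ) (g : ℝ × ℝ → ℂ) : ℝ :=
  ∫ x : ℝ × ℝ, (‖-Complex.I * fderiv ℝ g x (1, 0) - ((B / 2 * x.2 : ℝ) : ℂ) * g x‖ ^ 2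
    + ‖-Complex.I * fderiv ℝ g x (0, 1) + ((B / 2 * x.1 : ℝ) : ℂ) * g x‖ ^ 2)

/-- The kernel `I_{k_⊥}(x_⊥,y_⊥) = P₀(x_⊥,y_⊥) e^{k_⊥∧(x_⊥−y_⊥)/2} e^{i k_⊥·(x_⊥+y_⊥)/2}`
with `a∧b = a₁b₂ − a₂b₁`. -/
def Iker (B : ℝ) (k x y : ℝ × ℝ) : ℂ :=
  P0ker B x y * ((Real.exp ((k.1 * (x.2 - y.2) - k.2 * (x.1 - y.1)) / 2) : ℝ) : ℂ)
    * Complex.exp (Complex.I * (((k.1 * (x.1 + y.1) + k.2 * (x.2 + y.2)) / 2 : ℝ) : ℂ))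

open intervalIntegral Set Function

lemma sq_expand_aux (u v : ℂ) (c : ℝ) :
    ‖u - (c:ℂ)*v‖^2 = ‖u‖^2 - 2*c*(u * (starRingEnd ℂ) v).re + c^2*‖v‖^2 := by
  have h : ∀ z : ℂ, ‖z‖^2 = Complex.normSq z := fun z => by
    rw [Complex.sq_norm]
  rw [h, h, h]
  simp [Complex.normSq_apply, Complex.mul_re, Complex.mul_im]
  ring

theorem one_dim_lower_bound (a b : ℝ) (ha : 0 < a) (hb : 0 < b)
    (f : ℝ → ℂ) (hf : ContDiff ℝ (⊤ : ℕ∞) f) (hsupp : HasCompactSupport f)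
    (hnorm : (∫ t : ℝ, ‖f t‖ ^ 2) = a) :
    (∫ t : ℝ, ‖deriv f t‖ ^ 2) - b * ∫ t : ℝ, ‖f t‖ ^ 4 ≥ -(b ^ 2 * a ^ 3) / 12 := by
  obtain ⟨R, hR0, hRb⟩ := hsupp.isBounded.subset_ball_lt 0 0
  rw [Real.ball_eq_Ioo, zero_sub, zero_add] at hRb
  have hRR : -R ≤ R := by linarith
  have hf0 : ∀ t, t ∉ Ioo (-R) R → f t = 0 := fun t ht => by
    by_contra h
    exact ht (hRb (subset_tsupport f h))
  have hdf0 : ∀ t, t ∉ Ioo (-R) R → deriv f t = 0 := fun t ht => by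
    by_contra h
    exact ht (hRb (support_deriv_subset h))
  have hfd : ∀ t, HasDerivAt f (deriv f t) t := fun t =>
    ((hf.differentiable (by simp)) t).hasDerivAt
  have hfc : Continuous f := hf.continuous
  have hdc : Continuous (deriv f) := hf.continuous_deriv (by exact_mod_cast le_top)
  set ρ : ℝ → ℝ := fun t => ‖f t‖ ^ 2 with hρdef
  set ρ' : ℝ → ℝ := fun t => 2 * (deriv f t * (starRingEnd ℂ) (f t)).re with hρ'def
  have hρc : Continuous ρ := hfc.norm.pow 2
  have hρ'c : Continuous ρ' := by
    apply Continuous.mul continuous_const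
    exact Complex.continuous_re.comp (hdc.mul (Complex.continuous_conj.comp hfc))
  have hρd : ∀ t, HasDerivAt ρ (ρ' t) t := by
    intro t
    have h1 : HasDerivAt (fun s => (starRingEnd ℂ) (f s)) ((starRingEnd ℂ) (deriv f t)) t := by
      have := (Complex.conjCLE.toContinuousLinearMap.hasFDerivAt (x := f t)).comp_hasDerivAt t (hfd t)
      exact this
    have h2 : HasDerivAt (fun s => f s * (starRingEnd ℂ) (f s))
        (deriv f t * (starRingEnd ℂ) (f t) + f t * (starRingEnd ℂ) (deriv f t)) t :=
      (hfd t).mul h1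
    have h3 := (Complex.reCLM.hasFDerivAt
      (x := f t * (starRingEnd ℂ) (f t))).comp_hasDerivAt t h2
    have heq : (fun s => Complex.reCLM (f s * (starRingEnd ℂ) (f s))) = ρ := by
      funext s
      rw [Complex.reCLM_apply, Complex.mul_conj, Complex.ofReal_re, hρdef]
      simp [Complex.normSq_eq_norm_sq]
    simp only [Function.comp_def] at h3
    rw [heq] at h3
    refine h3.congr_deriv ?_
    simp only [hρ'def, Complex.reCLM_apply, Complex.add_re, Complex.mul_re,
      Complex.conj_re, Complex.conj_im]
    ring
  have hρ0 : ∀ t, t ∉ Ioo (-R) R → ρ t = 0 := fun t ht => by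
    simp [hρdef, hf0 t ht]
  -- antiderivative F
  set F : ℝ → ℝ := fun t => ∫ s in (-R)..t, ρ s with hFdef
  have hFd : ∀ t, HasDerivAt F (ρ t) t := fun t =>
    integral_hasDerivAt_right (hρc.intervalIntegrable _ _)
      hρc.aestronglyMeasurable.stronglyMeasurableAtFilter hρc.continuousAt
  have hFc : Continuous F := continuous_iff_continuousAt.2 fun t => (hFd t).continuousAt
  -- value of F at endpoints
  have hFm : F (-R) = 0 := integral_same
  have hFR : F R = a := by
    rw [hFdef]
    show (∫ s in (-R)..R, ρ s) = a
    rw [integral_eq_integral_of_support_subset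
      (subset_trans (fun t ht => by by_contra h; exact ht (hρ0 t h) |>.elim) Ioo_subset_Ioc_self)]
    exact hnorm
  -- c and W
  set c : ℝ → ℝ := fun t => b * (a/2 - F t) with hcdef
  set W : ℝ → ℝ := fun t => c t * ρ t + b^2/3 * (a/2 - F t)^3 with hWdef
  set W' : ℝ → ℝ := fun t => c t * ρ' t - b * ρ t^2 - c t^2 * ρ t with hW'def
  have hcd : ∀ t, HasDerivAt c (-b * ρ t) t := fun t => by
    have := ((hFd t).const_sub (a/2)).const_mul b
    refine this.congr_deriv ?_
    ring
  have hWd : ∀ t, HasDerivAt W (W' t) t := by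
    intro t
    have h1 : HasDerivAt (fun s => c s * ρ s) (-b * ρ t * ρ t + c t * ρ' t) t :=
      (hcd t).mul (hρd t)
    have h2 : HasDerivAt (fun s => a/2 - F s) (-ρ t) t := by
      simpa using (hFd t).const_sub (a/2)
    have h3 : HasDerivAt (fun s => b^2/3 * (a/2 - F s)^3)
        (b^2/3 * (3 * (a/2 - F t)^2 * (-ρ t))) t := by
      exact ((h2.pow 3).const_mul (b^2/3)).congr_deriv (by ring)
    have := h1.add h3
    refine this.congr_deriv ?_
    rw [hW'def, hcdef]
    ring
  have hcc : Continuous c := continuous_const.mul (continuous_const.sub hFc)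
  have hW'c : Continuous W' :=
    ((hcc.mul hρ'c).sub (continuous_const.mul (hρc.pow 2))).sub ((hcc.pow 2).mul hρc)
  -- pointwise inequality
  have hkey : ∀ t, b * ρ t^2 + W' t ≤ ‖deriv f t‖^2 := by
    intro t
    have h0 : (0:ℝ) ≤ ‖deriv f t - ((c t : ℝ) : ℂ) * f t‖^2 := by positivity
    rw [sq_expand_aux] at h0
    have e1 : ρ t = ‖f t‖^2 := rfl
    have e2 : ρ' t = 2 * (deriv f t * (starRingEnd ℂ) (f t)).re := rfl
    have e3 : W' t = c t * ρ' t - b * ρ t^2 - c t^2 * ρ t := rfl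
    rw [e3, e2, e1]
    linarith [h0]
  -- reduce whole-line integrals to the interval
  have hsubD : support (fun t => ‖deriv f t‖^2) ⊆ Ioc (-R) R := by
    intro t ht
    apply Ioo_subset_Ioc_self
    by_contra h
    exact ht (by simp [hdf0 t h])
  have hsubρ : support (fun t => ρ t^2) ⊆ Ioc (-R) R := by
    intro t ht
    apply Ioo_subset_Ioc_self
    by_contra h
    exact ht (by simp [hρ0 t h])
  have hI1 : (∫ t : ℝ, ‖deriv f t‖ ^ 2) = ∫ t in (-R)..R, ‖deriv f t‖^2 :=
    (integral_eq_integral_of_support_subset hsubD).symm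
  have hI2 : (∫ t : ℝ, ‖f t‖ ^ 4) = ∫ t in (-R)..R, ρ t^2 := by
    have : ∀ t, ‖f t‖ ^ 4 = ρ t ^ 2 := fun t => by rw [hρdef]; ring
    simp_rw [this]
    exact (integral_eq_integral_of_support_subset hsubρ).symm
  -- FTC for W
  have hW'I : (∫ t in (-R)..R, W' t) = W R - W (-R) :=
    integral_eq_sub_of_hasDerivAt (fun t _ => hWd t) ((hW'c.intervalIntegrable _ _))
  -- monotonicity
  have hmono : (∫ t in (-R)..R, (b * ρ t^2 + W' t)) ≤ ∫ t in (-R)..R, ‖deriv f t‖^2 :=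
    integral_mono_on hRR
      (((continuous_const.mul (hρc.pow 2)).add hW'c).intervalIntegrable _ _)
      (((hdc.norm.pow 2)).intervalIntegrable _ _)
      (fun t _ => hkey t)
  have hsplit : (∫ t in (-R)..R, (b * ρ t^2 + W' t))
      = b * (∫ t in (-R)..R, ρ t^2) + (W R - W (-R)) := by
    rw [integral_add (f := fun t => b * ρ t^2) ((continuous_const.mul (hρc.pow 2)).intervalIntegrable _ _)
      (hW'c.intervalIntegrable _ _), intervalIntegral.integral_const_mul, hW'I]
  -- endpoint values
  have hρR : ρ R = 0 := hρ0 R (by simp)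
  have hρmR : ρ (-R) = 0 := hρ0 (-R) (by simp)
  have hWR : W R = -(b^2 * a^3) / 24 := by
    rw [hWdef]
    show c R * ρ R + b^2/3 * (a/2 - F R)^3 = -(b^2 * a^3) / 24
    rw [hρR, hFR]; ring
  have hWmR : W (-R) = (b^2 * a^3) / 24 := by
    rw [hWdef]
    show c (-R) * ρ (-R) + b^2/3 * (a/2 - F (-R))^3 = (b^2 * a^3) / 24
    rw [hρmR, hFm]; ring
  rw [ge_iff_le, hI1, hI2]
  rw [hsplit, hWR, hWmR] at hmono
  linarith
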